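/- Let d ≥ 3, α = (d-2)/2, η ∈ S^{d-1}, and l a nonnegative integer. The harmonic component of highest degree l in the canonical decomposition of the polynomial P_η(x) = (x|η)^l, restricted to the unit sphere, is given by h_l(P_η)(ξ) = 2^{-l} Γ(α) Γ(l+1) (α+l)/Γ(α+l+1) · C^α_l((ξ|η)) for ξ ∈ S^{d-1}, where h_l(P) = Σ_{j=0}^{⌊l/2⌋} e^l_j(0) r^{2j} Δ^j P with e^l_j(0) = (-1)^j (α+l) Γ(α+l-j)/(4^j j! Γ(α+l+1)). -/

import Mathlib

open MeasureTheory MvPolynomial Finset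
open scoped RealInnerProductSpace

noncomputable section

/-- The Euclidean Laplacian `Δ = Σ_{j=1}^d ∂²/∂x_j²` acting on polynomials on `ℝ^d`. -/
def lap {d : ℕ} (P : MvPolynomial (Fin d) ℝ) : MvPolynomial (Fin d) ℝ :=
  ∑ i, pderiv i (pderiv i P)

/-- The polynomial `r² = |x|² = Σ_j x_j²` on `ℝ^d`. -/
def r2 (d : ℕ) : MvPolynomial (Fin d) ℝ := ∑ i, X i * X i

/-- The coefficients `e^l_j(k) = (-1)^j (α+l-2k) Γ(α+l-2k-j) / (4^{k+j} k! j! Γ(α+l+1-k))`. -/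
def ecoef (α : ℝ) (l j k : ℕ) : ℝ :=
  (-1) ^ j * (α + l - 2 * k) * Real.Gamma (α + l - 2 * k - j) /
    (4 ^ (k + j) * (Nat.factorial k) * (Nat.factorial j) * Real.Gamma (α + l + 1 - k))

/-- The harmonic component `h_{l-2k}(P) = Σ_{j=0}^{⌊l/2⌋-k} e^l_j(k) r^{2j} Δ^{k+j} P`. -/
def harmComp (d : ℕ) (α : ℝ) (l k : ℕ) (P : MvPolynomial (Fin d) ℝ) :
    MvPolynomial (Fin d) ℝ :=
  ∑ j ∈ Finset.range (l / 2 - k + 1), C (ecoef α l j k) * (r2 d) ^ j * lap^[k + j] P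

/-- The Gegenbauer polynomial of degree `m` and index `α`. -/
def gegenbauer (α : ℝ) (m : ℕ) (t : ℝ) : ℝ :=
  ∑ j ∈ Finset.range (m / 2 + 1),
    (-1) ^ j * Real.Gamma (α + m - j) /
      (Real.Gamma α * Real.Gamma (j + 1) * Real.Gamma ((m : ℝ) + 1 - 2 * j)) *
      (2 * t) ^ (m - 2 * j)

/-- The elementary zonal polynomial `P_η(x) = (x|η)^l` as a polynomial on `ℝ^d`. -/
def zonalPoly (d l : ℕ) (η : EuclideanSpace ℝ (Fin d)) : MvPolynomial (Fin d) ℝ :=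
  (∑ i, C (η i) * X i) ^ l

section Aux

variable {d : ℕ} (η : EuclideanSpace ℝ (Fin d))

local notation "L" => (∑ i, C (η i) * X i : MvPolynomial (Fin d) ℝ)

lemma pderiv_L (i : Fin d) : pderiv i L = C (η i) := by
  rw [map_sum]
  rw [Finset.sum_eq_single i]
  · simp
  · intro j _ hj; simp [pderiv_X_of_ne hj]
  · simp

lemma lap_C_mul (c : ℝ) (P : MvPolynomial (Fin d) ℝ) :
    lap (C c * P) = C c * lap P := by
  simp [lap, pderiv_C_mul, Finset.mul_sum]

lemma pderiv_L_pow (i : Fin d) (m : ℕ) :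
    pderiv i (L ^ m) = C ((m : ℝ) * η i) * L ^ (m - 1) := by
  rw [pderiv_pow, pderiv_L]
  simp only [map_mul]
  rw [show (C ((m:ℝ)) : MvPolynomial (Fin d) ℝ) = (m : MvPolynomial (Fin d) ℝ) by
    simp]
  ring

lemma lap_L_pow (m : ℕ) :
    lap (L ^ m) = C ((m : ℝ) * ((m - 1 : ℕ) : ℝ) * ∑ i, (η i)^2) * L ^ (m - 2) := by
  unfold lap
  have : ∀ i : Fin d, pderiv i (pderiv i (L ^ m)) =
      C ((m : ℝ) * ((m - 1 : ℕ) : ℝ) * (η i)^2) * L ^ (m - 2) := by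
    intro i
    rw [pderiv_L_pow, pderiv_C_mul, pderiv_L_pow]
    rw [show m - 1 - 1 = m - 2 by omega]
    rw [← mul_assoc, ← map_mul]
    ring_nf
  rw [Finset.sum_congr rfl (fun i _ => this i)]
  rw [← Finset.sum_mul, ← map_sum]
  congr 1
  rw [← Finset.mul_sum]

lemma iter_lap_L_pow (hs : ∑ i, (η i)^2 = 1) (l : ℕ) :
    ∀ j : ℕ, 2 * j ≤ l →
      lap^[j] (L ^ l) = C ((l.descFactorial (2*j) : ℝ)) * L ^ (l - 2*j) := by
  intro j
  induction j with
  | zero => intro _; simp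
  | succ j ih =>
    intro hj
    rw [Function.iterate_succ_apply', ih (by omega), lap_C_mul, lap_L_pow, hs]
    rw [← mul_assoc, ← map_mul]
    rw [show l - 2*j - 2 = l - 2*(j+1) by omega]
    congr 2
    rw [show 2*(j+1) = (2*j + 1) + 1 by omega]
    rw [Nat.descFactorial_succ, Nat.descFactorial_succ]
    rw [show l - 2*j - 1 = l - (2*j+1) by omega]
    push_cast [Nat.sub_le_iff_le_add]
    ring

lemma arith (α : ℝ) (hα0 : 0 < α) (l j : ℕ) (hj : 2*j ≤ l) (t : ℝ) :
    ecoef α l j 0 * ((l.descFactorial (2*j) : ℝ) * t^(l-2*j))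
    = (2:ℝ)^(-(l:ℤ)) * Real.Gamma α * Real.Gamma ((l:ℝ)+1) * ((α+l)/Real.Gamma (α+l+1)) *
      ((-1)^j * Real.Gamma (α+(l:ℝ)-j) /
        (Real.Gamma α * Real.Gamma ((j:ℝ)+1) * Real.Gamma ((l:ℝ)+1-2*j)) * (2*t)^(l-2*j)) := by
  have hgj : Real.Gamma ((j:ℝ)+1) = j.factorial := Real.Gamma_nat_eq_factorial j
  have hgl : Real.Gamma ((l:ℝ)+1) = l.factorial := Real.Gamma_nat_eq_factorial l
  have hgl2 : Real.Gamma ((l:ℝ)+1-2*j) = (l-2*j).factorial := by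
    rw [show (l:ℝ)+1-2*j = ((l-2*j:ℕ):ℝ)+1 by push_cast [hj]; ring]
    exact Real.Gamma_nat_eq_factorial _
  have hdf : (l.descFactorial (2*j) : ℝ) = l.factorial / (l-2*j).factorial := by
    rw [eq_div_iff (by positivity)]
    exact_mod_cast (mul_comm _ _).trans (Nat.factorial_mul_descFactorial hj)
  have hga : Real.Gamma α ≠ 0 := ne_of_gt (Real.Gamma_pos_of_pos hα0)
  have hgal : Real.Gamma (α+l+1) ≠ 0 := by
    apply ne_of_gt; apply Real.Gamma_pos_of_pos; positivity
  have h2 : (2:ℝ)^(-(l:ℤ)) = ((2:ℝ)^l)⁻¹ := by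
    rw [zpow_neg, zpow_natCast]
  have h4 : (4:ℝ)^j = 2^(2*j) := by rw [show (4:ℝ) = 2^2 by norm_num, ← pow_mul]
  have h2l : (2:ℝ)^(l-2*j) = 2^l / 2^(2*j) := pow_sub₀ 2 (by norm_num) hj
  rw [hdf]
  unfold ecoef
  simp only [Nat.cast_zero, mul_zero, sub_zero, Nat.factorial_zero, Nat.cast_one, zero_add,
    pow_zero, one_mul, mul_one]
  rw [hgj, hgl, hgl2, h2, h4, mul_pow, h2l]
  have hfne : ((l-2*j).factorial : ℝ) ≠ 0 := by positivity
  have hfne2 : ((j).factorial : ℝ) ≠ 0 := by positivity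
  field_simp

lemma sum_sq_eq_one (hη : ‖η‖ = 1) : ∑ i, (η i)^2 = 1 := by
  have h := real_inner_self_eq_norm_sq η
  rw [hη] at h
  rw [one_pow] at h
  rw [← h, PiLp.inner_apply]
  simp [RCLike.inner_apply, sq]

end Aux

/-- **Highest harmonic component of `(x|η)^l` (d ≥ 3, α = (d-2)/2).** On the unit sphere,
`h_l(P_η)(ξ) = 2^{-l} Γ(α) Γ(l+1) (α+l)/Γ(α+l+1) · C^α_l((ξ|η))`, where
`h_l(P) = Σ_{j=0}^{⌊l/2⌋} e^l_j(0) r^{2j} Δ^j P`. -/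
theorem highest_harmonic_component (d l : ℕ) (hd : 3 ≤ d)
    (α : ℝ) (hα : α = ((d : ℝ) - 2) / 2)
    (η ξ : EuclideanSpace ℝ (Fin d)) (hη : ‖η‖ = 1) (hξ : ‖ξ‖ = 1) :
    eval (fun i => ξ i) (harmComp d α l 0 (zonalPoly d l η)) =
      (2 : ℝ) ^ (-(l : ℤ)) * Real.Gamma α * Real.Gamma ((l : ℝ) + 1) *
        ((α + l) / Real.Gamma (α + l + 1)) * gegenbauer α l ⟪ξ, η⟫ := by
  have hα0 : 0 < α := by
    have : (3:ℝ) ≤ d := by exact_mod_cast hd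
    rw [hα]; linarith
  have hsη : ∑ i, (η i)^2 = 1 := sum_sq_eq_one η hη
  have hsξ : ∑ i, (ξ i)^2 = 1 := sum_sq_eq_one ξ hξ
  have hr2 : eval (fun i => ξ i) (r2 d) = 1 := by
    simpa [r2, sq] using hsξ
  have ht : eval (fun i => ξ i) (∑ i, C (η i) * X i) = ⟪ξ, η⟫ := by
    simp [PiLp.inner_apply, RCLike.inner_apply, mul_comm]
  unfold harmComp zonalPoly gegenbauer
  rw [map_sum, Finset.mul_sum]
  simp only [Nat.sub_zero, zero_add]
  refine Finset.sum_congr rfl fun j hj => ?_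
  have hjl : 2 * j ≤ l := by
    rw [Finset.mem_range] at hj; omega
  rw [iter_lap_L_pow η hsη l j hjl]
  simp only [map_mul, map_pow, eval_C, hr2, one_pow, mul_one, ht]
  rw [mul_assoc, arith α hα0 l j hjl ⟪ξ, η⟫]
  ring
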